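/- For every integer k ≥ 1, gcd(9^k + 1 - 16^k, 2·(4^k - 1)) = 2 · 3^{n+1}, where n is the 3-adic valuation of k (the largest n with 3^n ∣ k). (The gcd is taken of the integers 9^k + 1 - 16^k and 2·(4^k - 1).) -/

import Mathlib

/-- For every `k ≥ 1`,
`gcd(9^k + 1 - 16^k, 2·(4^k - 1)) = 2 · 3^{n+1}`, where `n` is the 3-adic
valuation of `k`. -/
theorem gcd_trefoil_figure_eight (k : ℕ) (hk : 1 ≤ k) :
    Int.gcd (9 ^ k + 1 - 16 ^ k) (2 * (4 ^ k - 1)) =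
      2 * 3 ^ (padicValNat 3 k + 1) := by
  have hp3 : Fact (Nat.Prime 3) := ⟨by norm_num⟩
  set n := padicValNat 3 k with hn
  -- exact 3-adic valuation of 4^k - 1
  have hval : padicValNat 3 (4 ^ k - 1) = n + 1 := by
    have h := padicValNat.pow_sub_pow (p := 3) (by decide) (x := 4) (y := 1)
      (by norm_num) (by norm_num) (by norm_num) (n := k) (by omega)
    simpa [padicValNat_self, add_comm] using h
  have h4pos : 1 ≤ (4:ℕ) ^ k := Nat.one_le_pow _ _ (by norm_num)
  have h4ne : (4:ℕ) ^ k - 1 ≠ 0 := by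
    have : 1 < (4:ℕ) ^ k := Nat.one_lt_pow (by omega) (by norm_num)
    omega
  have h31 : (3:ℕ) ^ (n + 1) ∣ 4 ^ k - 1 := by
    rw [← hval]; exact pow_padicValNat_dvd
  -- bound on n
  have hnk : n + 1 ≤ 2 * k := by
    have h3n : 3 ^ n ∣ k := pow_padicValNat_dvd
    have h1 : 3 ^ n ≤ k := Nat.le_of_dvd (by omega) h3n
    have h2 : n < 3 ^ n := Nat.lt_pow_self (by norm_num)
    omega
  -- casts
  have hcastB : ((2 * (4 ^ k - 1) : ℕ) : ℤ) = 2 * ((4:ℤ) ^ k - 1) := by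
    push_cast [h4pos]; ring
  have h31Z : ((3:ℤ)) ^ (n + 1) ∣ (4:ℤ) ^ k - 1 := by
    have := Int.natCast_dvd_natCast.mpr h31
    push_cast [h4pos] at this
    exact this
  have factor : (16:ℤ) ^ k - 1 = ((4:ℤ) ^ k - 1) * ((4:ℤ) ^ k + 1) := by
    rw [show (16:ℤ) = 4 * 4 by norm_num, mul_pow]; ring
  have h316 : ((3:ℤ)) ^ (n + 1) ∣ (16:ℤ) ^ k - 1 := by
    rw [factor]; exact h31Z.mul_right _
  -- part 1 : 2 * 3^(n+1) divides both
  have hA : ((2 * 3 ^ (n + 1) : ℕ) : ℤ) ∣ (9:ℤ) ^ k + 1 - 16 ^ k := by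
    have h2A : (2:ℤ) ∣ (9:ℤ) ^ k + 1 - 16 ^ k := by
      have h91 : (2:ℤ) ∣ 9 ^ k - 1 := by
        have := sub_dvd_pow_sub_pow (9:ℤ) 1 k
        simp only [one_pow] at this
        exact dvd_trans (by norm_num) this
      have h16k : (2:ℤ) ∣ 16 ^ k := dvd_pow (by norm_num) (by omega)
      have := dvd_sub h91 h16k
      have h2 := dvd_add this (dvd_refl (2:ℤ))
      rwa [show (9:ℤ) ^ k - 1 - 16 ^ k + 2 = 9 ^ k + 1 - 16 ^ k by ring] at h2
    have h3A : ((3:ℤ)) ^ (n + 1) ∣ (9:ℤ) ^ k + 1 - 16 ^ k := by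
      have h9 : (9:ℤ) ^ k = 3 ^ (2 * k) := by
        rw [pow_mul]; norm_num
      have hd1 : ((3:ℤ)) ^ (n + 1) ∣ (9:ℤ) ^ k := by
        rw [h9]; exact pow_dvd_pow 3 hnk
      have := dvd_sub hd1 h316
      rwa [show (9:ℤ) ^ k - ((16:ℤ) ^ k - 1) = 9 ^ k + 1 - 16 ^ k by ring] at this
    have hcop : IsCoprime (2:ℤ) (3 ^ (n + 1)) :=
      (Int.isCoprime_iff_gcd_eq_one.mpr (by norm_num)).pow_right
    have := hcop.mul_dvd h2A h3A
    push_cast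
    exact this
  have hB : ((2 * 3 ^ (n + 1) : ℕ) : ℤ) ∣ 2 * ((4:ℤ) ^ k - 1) := by
    push_cast
    exact mul_dvd_mul_left 2 h31Z
  have hdvd1 : 2 * 3 ^ (n + 1) ∣ Int.gcd (9 ^ k + 1 - 16 ^ k) (2 * (4 ^ k - 1)) := by
    exact_mod_cast Int.dvd_gcd hA hB
  -- part 2 : gcd divides 2 * 3^(n+1)
  set g := Int.gcd (9 ^ k + 1 - 16 ^ k) (2 * ((4:ℤ) ^ k - 1)) with hg
  have hgA : (g:ℤ) ∣ (9:ℤ) ^ k + 1 - 16 ^ k := Int.gcd_dvd_left _ _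
  have hgB : (g:ℤ) ∣ 2 * ((4:ℤ) ^ k - 1) := Int.gcd_dvd_right _ _
  have hg9 : (g:ℤ) ∣ 2 * 9 ^ k := by
    have h16 : (2 * ((4:ℤ) ^ k - 1)) ∣ 2 * ((16:ℤ) ^ k - 1) :=
      mul_dvd_mul_left 2 (by rw [factor]; exact dvd_mul_right _ _)
    have hg16 : (g:ℤ) ∣ 2 * ((16:ℤ) ^ k - 1) := hgB.trans h16
    have := dvd_add (hgA.mul_left 2) hg16
    rwa [show 2 * ((9:ℤ) ^ k + 1 - 16 ^ k) + 2 * ((16:ℤ) ^ k - 1) = 2 * 9 ^ k by ring] at this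
  have hg9N : g ∣ 2 * 9 ^ k := by
    have : (g:ℤ) ∣ ((2 * 9 ^ k : ℕ) : ℤ) := by push_cast; exact hg9
    exact_mod_cast this
  have hgBN : g ∣ 2 * (4 ^ k - 1) := by
    have : (g:ℤ) ∣ ((2 * (4 ^ k - 1) : ℕ) : ℤ) := by rw [hcastB]; exact hgB
    exact_mod_cast this
  have hgcd : g ∣ 2 * Nat.gcd (9 ^ k) (4 ^ k - 1) := by
    have := Nat.dvd_gcd hg9N hgBN
    rwa [Nat.gcd_mul_left] at this
  have hfin : Nat.gcd (9 ^ k) (4 ^ k - 1) ∣ 3 ^ (n + 1) := by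
    have h9 : (9:ℕ) ^ k = 3 ^ (2 * k) := by rw [pow_mul]; norm_num
    have hd3 : Nat.gcd (9 ^ k) (4 ^ k - 1) ∣ 3 ^ (2 * k) := h9 ▸ Nat.gcd_dvd_left _ _
    obtain ⟨j, hj, hje⟩ := (Nat.dvd_prime_pow (by norm_num : Nat.Prime 3)).mp hd3
    have hdm : 3 ^ j ∣ 4 ^ k - 1 := hje ▸ Nat.gcd_dvd_right _ _
    have hjle : j ≤ n + 1 := by
      have := (padicValNat_dvd_iff_le (p := 3) h4ne).mp hdm
      omega
    rw [hje]
    exact pow_dvd_pow 3 hjle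
  have hdvd2 : g ∣ 2 * 3 ^ (n + 1) := hgcd.trans (mul_dvd_mul_left 2 hfin)
  exact Nat.dvd_antisymm hdvd2 hdvd1
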